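/- arXiv:2206.13893 — 2 statements merged into one kernel-verified Lean document; each statement's English description precedes it below -/
import Mathlib

section
/- For real parameters $a>0$ and any real $\xi$, the Fourier transform $\int_{-\infty}^{\infty} e^{-i\xi x} (1-\tanh^2 x)^a\, dx$ equals $2^{2a-1} B(a + i\xi/2,\ a - i\xi/2)$, where $B$ denotes the Beta function extended to complex arguments with positive real part. -/
open MeasureTheory Finset

noncomputable section

/-- Pochhammer symbol `(a)_n` for real `a`. -/
def pochR (a : ℝ) (n : ℕ) : ℝ := ∏ k ∈ Finset.range n, (a + k)

/-- Pochhammer symbol `(a)_n` for complex `a`. -/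
def pochC (a : ℂ) (n : ℕ) : ℂ := ∏ k ∈ Finset.range n, (a + k)

/-- Gegenbauer polynomial `C_n^{(λ)}(x)` via the terminating `₂F₁` representation. -/
def Geg (n : ℕ) (lam : ℝ) (x : ℝ) : ℝ :=
  pochR (2 * lam) n / (Nat.factorial n) *
    ∑ l ∈ Finset.range (n + 1),
      pochR (-(n : ℝ)) l * pochR ((n : ℝ) + 2 * lam) l /
        (pochR (lam + 1 / 2) l * (Nat.factorial l)) * ((1 - x) / 2) ^ l

/-- Terminating generalized hypergeometric sum `₃F₂(-n, a₂, a₃; b₁, b₂; 1)`. -/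
def F32 (n : ℕ) (a2 a3 b1 b2 : ℂ) : ℂ :=
  ∑ l ∈ Finset.range (n + 1),
    pochC (-(n : ℂ)) l * pochC a2 l * pochC a3 l /
      (pochC b1 l * pochC b2 l * (Nat.factorial l))

/-- Beta function for complex arguments. -/
def BetaC (a b : ℂ) : ℂ := Complex.Gamma a * Complex.Gamma b / Complex.Gamma (a + b)

/-- Continuous Hahn polynomial `p_n(x; a, b, c, d)`. -/
def hahn (n : ℕ) (x a b c d : ℂ) : ℂ :=
  Complex.I ^ n * pochC (a + c) n * pochC (a + d) n / (Nat.factorial n) *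
    F32 n ((n : ℂ) + a + b + c + d - 1) (a + Complex.I * x) (a + c) (a + d)

def myPhi (x : ℝ) : ℝ := (1 + Real.tanh x) / 2

lemma tanh_eq' (x : ℝ) : Real.tanh x = 1 - 2 / (Real.exp (2*x) + 1) := by
  have h1 : Real.exp (2*x) = Real.exp x * Real.exp x := by rw [two_mul, Real.exp_add]
  have h2 : Real.exp (-x) = 1 / Real.exp x := by rw [Real.exp_neg]; ring
  have h3 : (0:ℝ) < Real.exp x := Real.exp_pos x
  have h4 : Real.exp x + Real.exp (-x) ≠ 0 := by positivity
  have h5 : Real.exp (2*x) + 1 ≠ 0 := by positivity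
  rw [Real.tanh_eq_sinh_div_cosh, Real.sinh_eq, Real.cosh_eq]
  rw [h1] at h5 ⊢
  rw [h2] at h4 ⊢
  field_simp
  ring

lemma phi_mem (x : ℝ) : myPhi x ∈ Set.Ioo (0:ℝ) 1 := by
  have h : (0:ℝ) < Real.exp (2*x) + 1 := by positivity
  have h2 : 2 / (Real.exp (2*x) + 1) < 2 := by
    rw [div_lt_iff₀ h]; nlinarith [Real.exp_pos (2*x)]
  have h3 : 0 < 2 / (Real.exp (2*x) + 1) := by positivity
  constructor <;> [skip; skip] <;> (simp only [myPhi, tanh_eq']; nlinarith)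

lemma phi_strictMono : StrictMono myPhi := by
  intro x y hxy
  have h1 : (0:ℝ) < Real.exp (2*x) + 1 := by positivity
  have h2 : (0:ℝ) < Real.exp (2*y) + 1 := by positivity
  have h3 : Real.exp (2*x) < Real.exp (2*y) := Real.exp_lt_exp.2 (by linarith)
  simp only [myPhi, tanh_eq']
  have : 2 / (Real.exp (2*y) + 1) < 2 / (Real.exp (2*x) + 1) := by
    apply div_lt_div_of_pos_left (by norm_num) h1 (by linarith)
  linarith

lemma phi_surj {u : ℝ} (hu : u ∈ Set.Ioo (0:ℝ) 1) : ∃ x, myPhi x = u := by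
  obtain ⟨h0, h1⟩ := hu
  refine ⟨Real.log (u / (1 - u)) / 2, ?_⟩
  have hq : (0:ℝ) < 1 - u := by linarith
  have he : Real.exp (2 * (Real.log (u / (1 - u)) / 2)) = u / (1 - u) := by
    rw [show 2 * (Real.log (u / (1 - u)) / 2) = Real.log (u / (1-u)) by ring,
      Real.exp_log (by positivity)]
  simp only [myPhi, tanh_eq', he]
  have : u / (1 - u) + 1 = 1 / (1 - u) := by field_simp; ring
  rw [this]
  field_simp
  ring

lemma tanh_hasDeriv (x : ℝ) : HasDerivAt Real.tanh (1 - Real.tanh x ^ 2) x := by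
  have hc : Real.cosh x ≠ 0 := ne_of_gt (Real.cosh_pos x)
  have h := (Real.hasDerivAt_sinh x).div (Real.hasDerivAt_cosh x) hc
  have heq : ∀ y, Real.tanh y = Real.sinh y / Real.cosh y := fun y => Real.tanh_eq_sinh_div_cosh (x:=y)
  rw [show (Real.sinh / Real.cosh) = Real.tanh by ext y; rw [Pi.div_apply, heq]] at h
  refine h.congr_deriv ?_
  have := Real.cosh_sq_sub_sinh_sq x
  rw [heq]
  field_simp

lemma phi_hasDeriv (x : ℝ) : HasDerivAt myPhi ((1 - Real.tanh x ^ 2)/2) x := by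
  have h := ((tanh_hasDeriv x).const_add 1).div_const 2
  exact h

lemma sech_eq_phi (x : ℝ) : 1 - Real.tanh x ^ 2 = 4 * myPhi x * (1 - myPhi x) := by
  simp only [myPhi]; ring

lemma log_phi_sub (x : ℝ) : Real.log (myPhi x) - Real.log (1 - myPhi x) = 2 * x := by
  have hp := phi_mem x
  have h1 : myPhi x / (1 - myPhi x) = Real.exp (2*x) := by
    simp only [myPhi, tanh_eq']
    have h : (0:ℝ) < Real.exp (2*x) + 1 := by positivity
    field_simp
    ring
  rw [← Real.log_div (ne_of_gt hp.1) (by simp only [sub_ne_zero]; exact fun h => absurd h.symm (ne_of_lt hp.2)), h1, Real.log_exp]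

lemma pointwise (a ξ x : ℝ) (ha : 0 < a) :
    Complex.exp (-(Complex.I * (ξ : ℂ) * (x : ℂ))) * (((1 - Real.tanh x ^ 2) ^ a : ℝ) : ℂ)
      = (((2 : ℝ) ^ (2 * a - 1) : ℝ) : ℂ) *
        (|(1 - Real.tanh x ^ 2) / 2| •
          (((myPhi x : ℝ) : ℂ) ^ ((a : ℂ) - Complex.I * (ξ : ℂ) / 2 - 1) *
            (((1 - myPhi x : ℝ)) : ℂ) ^ ((a : ℂ) + Complex.I * (ξ : ℂ) / 2 - 1))) := by
  obtain ⟨hp, hp1⟩ := phi_mem x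
  have hq : (0:ℝ) < 1 - myPhi x := by linarith
  set p := myPhi x with hpdef
  set q := 1 - myPhi x with hqdef
  have hsech : 1 - Real.tanh x ^ 2 = 4 * p * q := sech_eq_phi x
  have hlog : Real.log p - Real.log q = 2 * x := log_phi_sub x
  have habs : |(1 - Real.tanh x ^ 2) / 2| = 2 * p * q := by
    rw [hsech, abs_of_pos (by positivity)]; ring
  rw [habs]
  -- convert everything to Complex.exp
  have e1 : (((1 - Real.tanh x ^ 2) ^ a : ℝ) : ℂ)
      = Complex.exp (a * (Real.log 4 + Real.log p + Real.log q)) := by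
    rw [hsech, Real.rpow_def_of_pos (by positivity),
      Real.log_mul (by positivity) (ne_of_gt hq), Real.log_mul (by norm_num) (ne_of_gt hp),
      Complex.ofReal_exp]
    congr 1
    push_cast
    ring
  have e2 : (((2 : ℝ) ^ (2 * a - 1) : ℝ) : ℂ) = Complex.exp ((2*a-1) * Real.log 2) := by
    rw [Real.rpow_def_of_pos (by norm_num), Complex.ofReal_exp]
    congr 1; push_cast; ring
  have e3 : ((2 * p * q : ℝ) : ℂ) = Complex.exp ((Real.log 2 + Real.log p + Real.log q : ℝ)) := by
    rw [← Real.log_mul (by norm_num) (ne_of_gt hp), ← Real.log_mul (by positivity) (ne_of_gt hq),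
      ← Complex.ofReal_exp, Real.exp_log (by positivity)]
  have e4 : ((p : ℝ) : ℂ) ^ ((a : ℂ) - Complex.I * (ξ : ℂ) / 2 - 1)
      = Complex.exp (((a : ℂ) - Complex.I * (ξ : ℂ) / 2 - 1) * Real.log p) := by
    rw [Complex.cpow_def_of_ne_zero (by exact_mod_cast ne_of_gt hp), Complex.ofReal_log hp.le,
      mul_comm]
  have e5 : ((q : ℝ) : ℂ) ^ ((a : ℂ) + Complex.I * (ξ : ℂ) / 2 - 1)
      = Complex.exp (((a : ℂ) + Complex.I * (ξ : ℂ) / 2 - 1) * Real.log q) := by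
    rw [Complex.cpow_def_of_ne_zero (by exact_mod_cast ne_of_gt hq), Complex.ofReal_log hq.le,
      mul_comm]
  have e6 : Real.log 4 = 2 * Real.log 2 := by
    rw [show (4:ℝ) = 2^2 by norm_num, Real.log_pow]; push_cast; ring
  rw [e1, e2, Complex.real_smul, e3, e4, e5, e6, ← Complex.exp_add]
  simp only [← Complex.exp_add]
  congr 1
  have hc : (Real.log p : ℂ) - Real.log q = 2 * (x:ℂ) := by
    have h2 := congrArg (fun r : ℝ => (r : ℂ)) hlog
    push_cast at h2
    linear_combination h2
  push_cast
  linear_combination (Complex.I * (ξ:ℂ) / 2) * hc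

theorem stmt_0 (a : ℝ) (ha : 0 < a) (ξ : ℝ) :
    ∫ x : ℝ, Complex.exp (-(Complex.I * (ξ : ℂ) * (x : ℂ))) *
        (((1 - Real.tanh x ^ 2) ^ a : ℝ) : ℂ)
      = (((2 : ℝ) ^ (2 * a - 1) : ℝ) : ℂ) *
        BetaC ((a : ℂ) + Complex.I * (ξ : ℂ) / 2) ((a : ℂ) - Complex.I * (ξ : ℂ) / 2) := by
  have hcre : 0 < ((a : ℂ) - Complex.I * (ξ : ℂ) / 2).re := by
    simp [Complex.div_re]; exact ha
  have hdre : 0 < ((a : ℂ) + Complex.I * (ξ : ℂ) / 2).re := by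
    simp [Complex.div_re]; exact ha
  have himg : myPhi '' Set.univ = Set.Ioo 0 1 := by
    rw [Set.image_univ]
    ext u
    constructor
    · rintro ⟨x, rfl⟩; exact phi_mem x
    · exact phi_surj
  have hsub := MeasureTheory.integral_image_eq_integral_abs_deriv_smul MeasurableSet.univ
      (fun x _ => (phi_hasDeriv x).hasDerivWithinAt) (phi_strictMono.injective.injOn)
      (fun u : ℝ => ((u : ℝ) : ℂ) ^ ((a : ℂ) - Complex.I * (ξ : ℂ) / 2 - 1) *
        (((1 - u : ℝ)) : ℂ) ^ ((a : ℂ) + Complex.I * (ξ : ℂ) / 2 - 1))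
  rw [himg] at hsub
  have hbeta : Complex.betaIntegral ((a : ℂ) - Complex.I * (ξ : ℂ) / 2)
      ((a : ℂ) + Complex.I * (ξ : ℂ) / 2)
      = ∫ u in Set.Ioo (0:ℝ) 1, ((u : ℝ) : ℂ) ^ ((a : ℂ) - Complex.I * (ξ : ℂ) / 2 - 1) *
        (((1 - u : ℝ)) : ℂ) ^ ((a : ℂ) + Complex.I * (ξ : ℂ) / 2 - 1) := by
    rw [Complex.betaIntegral, intervalIntegral.integral_of_le zero_le_one,
      MeasureTheory.integral_Ioc_eq_integral_Ioo]
    apply MeasureTheory.setIntegral_congr_fun measurableSet_Ioo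
    intro u _
    push_cast
    ring
  calc ∫ x : ℝ, Complex.exp (-(Complex.I * (ξ : ℂ) * (x : ℂ))) *
        (((1 - Real.tanh x ^ 2) ^ a : ℝ) : ℂ)
      = ∫ x : ℝ, (((2 : ℝ) ^ (2 * a - 1) : ℝ) : ℂ) *
        (|(1 - Real.tanh x ^ 2) / 2| •
          (((myPhi x : ℝ) : ℂ) ^ ((a : ℂ) - Complex.I * (ξ : ℂ) / 2 - 1) *
            (((1 - myPhi x : ℝ)) : ℂ) ^ ((a : ℂ) + Complex.I * (ξ : ℂ) / 2 - 1))) := by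
        exact MeasureTheory.integral_congr_ae (Filter.Eventually.of_forall
          (fun x => pointwise a ξ x ha))
    _ = (((2 : ℝ) ^ (2 * a - 1) : ℝ) : ℂ) * ∫ x : ℝ,
        (|(1 - Real.tanh x ^ 2) / 2| •
          (((myPhi x : ℝ) : ℂ) ^ ((a : ℂ) - Complex.I * (ξ : ℂ) / 2 - 1) *
            (((1 - myPhi x : ℝ)) : ℂ) ^ ((a : ℂ) + Complex.I * (ξ : ℂ) / 2 - 1))) :=
        MeasureTheory.integral_const_mul _ _
    _ = (((2 : ℝ) ^ (2 * a - 1) : ℝ) : ℂ) *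
        Complex.betaIntegral ((a : ℂ) - Complex.I * (ξ : ℂ) / 2)
          ((a : ℂ) + Complex.I * (ξ : ℂ) / 2) := by
        rw [hbeta, hsub, Measure.restrict_univ]
    _ = (((2 : ℝ) ^ (2 * a - 1) : ℝ) : ℂ) *
        BetaC ((a : ℂ) + Complex.I * (ξ : ℂ) / 2) ((a : ℂ) - Complex.I * (ξ : ℂ) / 2) := by
        rw [BetaC, Complex.Gamma_mul_Gamma_eq_betaIntegral hdre hcre,
          Complex.betaIntegral_symm, mul_div_cancel_left₀ _
            (Complex.Gamma_ne_zero_of_re_pos (by simp [Complex.div_re]; linarith))]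
end
end

section
/- For $a > 0$, $\mu > -1/2$, $n$ a nonnegative integer, and $\xi \in \mathbb{R}$, the Fourier transform of $f_1(x) = (1-\tanh^2 x)^a C_n^{(\mu)}(\tanh x)$ is $\mathcal{F}(f_1)(\xi) = \frac{2^{2a-1}(2\mu)_n}{n!}\, B\!\left(a+\tfrac{i\xi}{2}, a-\tfrac{i\xi}{2}\right)\, {}_3F_2\!\left(\begin{smallmatrix} -n,\ n+2\mu,\ a+\frac{i\xi}{2} \\ 2a,\ \mu+\frac12 \end{smallmatrix}\;\middle|\;1\right)$. -/
open MeasureTheory Finset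

noncomputable section

/-! ### Auxiliary lemmas -/

lemma pochC_ofReal (a : ℝ) (n : ℕ) : ((pochR a n : ℝ) : ℂ) = pochC (a : ℂ) n := by
  simp [pochR, pochC]

lemma pochC_zero' (a : ℂ) : pochC a 0 = 1 := by simp [pochC]

lemma pochC_succ' (a : ℂ) (l : ℕ) : pochC a (l+1) = pochC a l * (a + l) := by
  simp [pochC, Finset.prod_range_succ]

lemma pochC_ne_zero {a : ℂ} (ha : 0 < a.re) (l : ℕ) : pochC a l ≠ 0 := by
  refine Finset.prod_ne_zero_iff.mpr fun k _ => ?_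
  intro h
  have hre := congrArg Complex.re h
  simp only [Complex.add_re, Complex.natCast_re, Complex.zero_re] at hre
  have hk : (0:ℝ) ≤ (k:ℝ) := Nat.cast_nonneg k
  linarith

lemma Gamma_add_nat {z : ℂ} (hz : 0 < z.re) (l : ℕ) :
    Complex.Gamma (z + l) = pochC z l * Complex.Gamma z := by
  induction l with
  | zero => simp [pochC_zero']
  | succ l ih =>
    have hne : z + l ≠ 0 := by
      intro h
      have hre := congrArg Complex.re h
      simp only [Complex.add_re, Complex.natCast_re, Complex.zero_re] at hre
      have hk : (0:ℝ) ≤ (l:ℝ) := Nat.cast_nonneg l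
      linarith
    have h : z + ((l+1 : ℕ) : ℂ) = (z + l) + 1 := by push_cast; ring
    rw [h, Complex.Gamma_add_one _ hne, ih, pochC_succ']
    ring

lemma beta_shift {p q : ℂ} (hp : 0 < p.re) (hq : 0 < q.re) (l : ℕ) :
    Complex.betaIntegral p (q + l) =
      Complex.Gamma p * Complex.Gamma q * pochC q l /
        (Complex.Gamma (p + q) * pochC (p + q) l) := by
  have hql : 0 < (q + l).re := by
    simp only [Complex.add_re, Complex.natCast_re]
    have : (0:ℝ) ≤ (l:ℝ) := Nat.cast_nonneg l
    linarith
  have hpq : 0 < (p + q).re := by simp only [Complex.add_re]; linarith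
  have h1 := Complex.Gamma_mul_Gamma_eq_betaIntegral hp hql
  have hGne : Complex.Gamma (p + (q + l)) ≠ 0 := by
    apply Complex.Gamma_ne_zero_of_re_pos
    simp only [Complex.add_re, Complex.natCast_re]
    have : (0:ℝ) ≤ (l:ℝ) := Nat.cast_nonneg l
    linarith
  have h2 : Complex.betaIntegral p (q + l) =
      Complex.Gamma p * Complex.Gamma (q + l) / Complex.Gamma (p + q + l) := by
    rw [show p + (q + (l:ℂ)) = p + q + l from by ring] at h1 hGne
    rw [eq_div_iff hGne]
    linear_combination -h1
  rw [h2, Gamma_add_nat hq l, Gamma_add_nat hpq l]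
  ring

/-! ### The substitution map -/

def Phi (u : ℝ) : ℝ := (Real.log u - Real.log (1 - u)) / 2

lemma tanh_formula (x : ℝ) :
    Real.tanh x = (Real.exp (2*x) - 1) / (Real.exp (2*x) + 1) := by
  have h2 : Real.exp (2*x) = Real.exp x * Real.exp x := by
    rw [← Real.exp_add]; ring_nf
  have hx := Real.exp_pos x
  rw [Real.tanh_eq_sinh_div_cosh, Real.sinh_eq, Real.cosh_eq, h2, Real.exp_neg]
  have h1 : Real.exp x + (Real.exp x)⁻¹ ≠ 0 := by positivity
  have h3 : Real.exp x * Real.exp x + 1 ≠ 0 := by positivity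
  field_simp

lemma exp_two_Phi {u : ℝ} (hu : u ∈ Set.Ioo (0:ℝ) 1) :
    Real.exp (2 * Phi u) = u / (1 - u) := by
  have h1 : (0:ℝ) < u := hu.1
  have h2 : (0:ℝ) < 1 - u := by linarith [hu.2]
  rw [Phi]
  rw [show 2 * ((Real.log u - Real.log (1-u))/2) = Real.log u - Real.log (1-u) by ring,
    Real.exp_sub, Real.exp_log h1, Real.exp_log h2]

lemma tanh_Phi {u : ℝ} (hu : u ∈ Set.Ioo (0:ℝ) 1) : Real.tanh (Phi u) = 2*u - 1 := by
  have h1 : (0:ℝ) < u := hu.1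
  have h2 : (0:ℝ) < 1 - u := by linarith [hu.2]
  rw [tanh_formula, exp_two_Phi hu]
  have h3 : u / (1-u) + 1 ≠ 0 := by positivity
  field_simp
  ring

lemma hasDerivAt_Phi {u : ℝ} (hu : u ∈ Set.Ioo (0:ℝ) 1) :
    HasDerivAt Phi (1 / (2*u*(1-u))) u := by
  have h1 : (0:ℝ) < u := hu.1
  have h2 : (0:ℝ) < 1 - u := by linarith [hu.2]
  have d1 : HasDerivAt Real.log u⁻¹ u := Real.hasDerivAt_log h1.ne'
  have d2 : HasDerivAt (fun v : ℝ => Real.log (1 - v)) (-(1-u)⁻¹) u := by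
    have : HasDerivAt (fun v : ℝ => 1 - v) (-1) u := by
      simpa using (hasDerivAt_id u).const_sub 1
    have h3 := (Real.hasDerivAt_log h2.ne').comp u this
    rw [mul_neg_one] at h3
    exact h3
  have := (d1.sub d2).div_const 2
  refine this.congr_deriv ?_
  field_simp
  ring

lemma Phi_image : Phi '' Set.Ioo (0:ℝ) 1 = Set.univ := by
  apply Set.eq_univ_of_forall
  intro x
  set E := Real.exp (2*x) with hE
  have hEpos : 0 < E := Real.exp_pos _
  refine ⟨E / (E + 1), ⟨by positivity, ?_⟩, ?_⟩
  · rw [div_lt_one (by positivity)]; linarith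
  · have h1mu : 1 - E/(E+1) = 1/(E+1) := by field_simp; ring
    rw [Phi, h1mu, ← Real.log_div (by positivity) (by positivity)]
    rw [show E/(E+1) / (1/(E+1)) = E by field_simp]
    rw [hE, Real.log_exp]
    ring

lemma Phi_injOn : Set.InjOn Phi (Set.Ioo (0:ℝ) 1) := by
  intro u hu v hv h
  have := congrArg Real.tanh h
  rw [tanh_Phi hu, tanh_Phi hv] at this
  linarith

/-! ### Pointwise computation of the substituted integrand -/

lemma sub_integrand (a ξ : ℝ) (G : ℝ) {u : ℝ} (hu : u ∈ Set.Ioo (0:ℝ) 1) :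
    |1 / (2*u*(1-u))| • (Complex.exp (-(Complex.I * (ξ:ℂ) * ((Phi u : ℝ):ℂ))) *
      ((((1 - (2*u-1) ^ 2) ^ a) * G : ℝ) : ℂ))
    = (((2:ℝ)^(2*a-1) : ℝ) : ℂ) * (((u:ℝ):ℂ) ^ ((a:ℂ) - Complex.I*(ξ:ℂ)/2 - 1) *
        (((1-u:ℝ)):ℂ) ^ ((a:ℂ) + Complex.I*(ξ:ℂ)/2 - 1) * ((G:ℝ):ℂ)) := by
  obtain ⟨h1, h2'⟩ := hu
  have h2 : (0:ℝ) < 1 - u := by linarith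
  set L := Real.log u with hL
  set M := Real.log (1 - u) with hM
  have habs : |1 / (2*u*(1-u))| = 1/(2*u*(1-u)) := abs_of_pos (by positivity)
  have hbase : (1 - (2*u-1)^2 : ℝ) = 4*(u*(1-u)) := by ring
  have hreal : (1 - (2*u-1)^2 : ℝ) ^ a * (1/(2*u*(1-u)))
      = 2^(2*a-1) * (Real.exp ((a-1)*L) * Real.exp ((a-1)*M)) := by
    rw [hbase]
    have e1 : (4*(u*(1-u))) ^ a = 4^a * (u^a * (1-u)^a) := by
      rw [Real.mul_rpow (by norm_num) (by positivity), Real.mul_rpow h1.le h2.le]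
    have e4 : (4:ℝ)^a = 2^(2*a-1) * 2 := by
      rw [show (4:ℝ) = 2*2 by norm_num, Real.mul_rpow (by norm_num) (by norm_num),
        ← Real.rpow_add (by norm_num : (0:ℝ) < 2), show a + a = (2*a-1)+1 by ring,
        Real.rpow_add (by norm_num : (0:ℝ) < 2), Real.rpow_one]
    have eu : u ^ a = Real.exp (a * L) := by
      rw [Real.rpow_def_of_pos h1, mul_comm]
    have ev : (1-u) ^ a = Real.exp (a * M) := by
      rw [Real.rpow_def_of_pos h2, mul_comm]
    have eu1 : u = Real.exp L := (Real.exp_log h1).symm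
    have ev1 : (1-u) = Real.exp M := (Real.exp_log h2).symm
    rw [e1, e4, eu, ev]
    rw [show (a-1)*L = a*L - L by ring, show (a-1)*M = a*M - M by ring,
      Real.exp_sub, Real.exp_sub]
    rw [← eu1, ← ev1]
    field_simp
  have cpu : ((u:ℝ):ℂ) ^ ((a:ℂ) - Complex.I*(ξ:ℂ)/2 - 1)
      = Complex.exp (((a:ℂ) - Complex.I*(ξ:ℂ)/2 - 1) * (L:ℂ)) := by
    rw [Complex.cpow_def_of_ne_zero (by exact_mod_cast h1.ne'), mul_comm,
      ← Complex.ofReal_log h1.le]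
  have cpv : (((1-u:ℝ)):ℂ) ^ ((a:ℂ) + Complex.I*(ξ:ℂ)/2 - 1)
      = Complex.exp (((a:ℂ) + Complex.I*(ξ:ℂ)/2 - 1) * (M:ℂ)) := by
    rw [Complex.cpow_def_of_ne_zero (by exact_mod_cast h2.ne'), mul_comm,
      ← Complex.ofReal_log h2.le]
  rw [habs, cpu, cpv]
  have key : (1 / (2*u*(1-u))) • (Complex.exp (-(Complex.I * (ξ:ℂ) * ((Phi u:ℝ):ℂ))) *
        ((((1 - (2*u-1) ^ 2) ^ a) * G : ℝ) : ℂ))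
      = (((1 - (2*u-1)^2)^a * (1/(2*u*(1-u))) : ℝ) : ℂ) *
          Complex.exp (-(Complex.I * (ξ:ℂ) * ((Phi u:ℝ):ℂ))) * ((G:ℝ):ℂ) := by
    rw [Complex.real_smul]
    push_cast
    ring
  rw [key, hreal]
  have hexp : Complex.exp ((((a-1)*L : ℝ)):ℂ) * Complex.exp ((((a-1)*M : ℝ)):ℂ) *
        Complex.exp (-(Complex.I * (ξ:ℂ) * ((Phi u:ℝ):ℂ)))
      = Complex.exp (((a:ℂ) - Complex.I*(ξ:ℂ)/2 - 1) * (L:ℂ)) *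
          Complex.exp (((a:ℂ) + Complex.I*(ξ:ℂ)/2 - 1) * (M:ℂ)) := by
    rw [← Complex.exp_add, ← Complex.exp_add, ← Complex.exp_add]
    congr 1
    rw [Phi, hL, hM]
    push_cast
    ring
  rw [← hexp]
  push_cast
  ring

theorem stmt_4 (a μ : ℝ) (ha : 0 < a) (hμ : -1/2 < μ) (n : ℕ) (ξ : ℝ) :
    ∫ x : ℝ, Complex.exp (-(Complex.I * (ξ : ℂ) * (x : ℂ))) *
        ((((1 - Real.tanh x ^ 2) ^ a) * Geg n μ (Real.tanh x) : ℝ) : ℂ)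
      = ((((2 : ℝ) ^ (2 * a - 1)) * pochR (2 * μ) n / (Nat.factorial n) : ℝ) : ℂ) *
        BetaC ((a : ℂ) + Complex.I * (ξ : ℂ) / 2) ((a : ℂ) - Complex.I * (ξ : ℂ) / 2) *
        F32 n ((n : ℂ) + 2 * (μ : ℂ)) ((a : ℂ) + Complex.I * (ξ : ℂ) / 2)
          (2 * (a : ℂ)) ((μ : ℂ) + 1/2) := by
  have hμ2 : (0:ℝ) < μ + 1/2 := by linarith
  have hp : 0 < ((a:ℂ) - Complex.I*(ξ:ℂ)/2).re := by
    simpa using ha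
  have hq : 0 < ((a:ℂ) + Complex.I*(ξ:ℂ)/2).re := by
    simpa using ha
  have hql : ∀ l : ℕ, 0 < (((a:ℂ) + Complex.I*(ξ:ℂ)/2) + l).re := by
    intro l
    have : (0:ℝ) ≤ (l:ℝ) := Nat.cast_nonneg l
    simp only [Complex.add_re, Complex.natCast_re]
    have h := hq
    simp only [Complex.add_re] at h
    linarith
  calc
    ∫ x : ℝ, Complex.exp (-(Complex.I * (ξ : ℂ) * (x : ℂ))) *
        ((((1 - Real.tanh x ^ 2) ^ a) * Geg n μ (Real.tanh x) : ℝ) : ℂ)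
      = ∫ x in Phi '' Set.Ioo (0:ℝ) 1, Complex.exp (-(Complex.I * (ξ : ℂ) * (x : ℂ))) *
          ((((1 - Real.tanh x ^ 2) ^ a) * Geg n μ (Real.tanh x) : ℝ) : ℂ) := by
        rw [Phi_image, setIntegral_univ]
    _ = ∫ u in Set.Ioo (0:ℝ) 1, |1/(2*u*(1-u))| •
          (Complex.exp (-(Complex.I * (ξ : ℂ) * ((Phi u : ℝ) : ℂ))) *
          ((((1 - Real.tanh (Phi u) ^ 2) ^ a) * Geg n μ (Real.tanh (Phi u)) : ℝ) : ℂ)) := by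
        exact integral_image_eq_integral_abs_deriv_smul measurableSet_Ioo
          (fun u hu => (hasDerivAt_Phi hu).hasDerivWithinAt) Phi_injOn _
    _ = ∫ u in Set.Ioo (0:ℝ) 1, ∑ l ∈ Finset.range (n+1),
          ((((2:ℝ)^(2*a-1) : ℝ) : ℂ) * ((pochR (2*μ) n / (Nat.factorial n) : ℝ) : ℂ) *
            ((pochR (-(n:ℝ)) l * pochR ((n:ℝ) + 2*μ) l /
              (pochR (μ + 1/2) l * (Nat.factorial l)) : ℝ) : ℂ)) *
          ((u:ℂ) ^ (((a:ℂ) - Complex.I*(ξ:ℂ)/2) - 1) *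
            (1 - (u:ℂ)) ^ ((((a:ℂ) + Complex.I*(ξ:ℂ)/2) + l) - 1)) := by
        refine setIntegral_congr_fun measurableSet_Ioo (fun u hu => ?_)
        have h1 : (0:ℝ) < u := hu.1
        have h2 : (0:ℝ) < 1 - u := by linarith [hu.2]
        have hne : (1:ℂ) - (u:ℂ) ≠ 0 := by
          intro h
          have : ((1 - u : ℝ) : ℂ) = 0 := by push_cast; linear_combination h
          exact h2.ne' (by exact_mod_cast this)
        rw [tanh_Phi hu, sub_integrand a ξ _ hu]
        rw [Geg]
        push_cast
        rw [show ((1:ℂ) - (2*(u:ℂ) - 1))/2 = 1 - (u:ℂ) by ring]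
        simp only [Finset.mul_sum]
        refine Finset.sum_congr rfl fun l _ => ?_
        rw [show (((a:ℂ) + Complex.I*(ξ:ℂ)/2) + (l:ℂ)) - 1
            = (((a:ℂ) + Complex.I*(ξ:ℂ)/2) - 1) + (l:ℂ) by ring,
          Complex.cpow_add _ _ hne, Complex.cpow_natCast]
        ring
    _ = ∑ l ∈ Finset.range (n+1),
          ((((2:ℝ)^(2*a-1) : ℝ) : ℂ) * ((pochR (2*μ) n / (Nat.factorial n) : ℝ) : ℂ) *
            ((pochR (-(n:ℝ)) l * pochR ((n:ℝ) + 2*μ) l /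
              (pochR (μ + 1/2) l * (Nat.factorial l)) : ℝ) : ℂ)) *
          Complex.betaIntegral ((a:ℂ) - Complex.I*(ξ:ℂ)/2) (((a:ℂ) + Complex.I*(ξ:ℂ)/2) + l) := by
        rw [MeasureTheory.integral_finset_sum _ (fun l _ => ?_)]
        · refine Finset.sum_congr rfl fun l _ => ?_
          rw [MeasureTheory.integral_const_mul]
          congr 1
          rw [Complex.betaIntegral, intervalIntegral.integral_of_le zero_le_one,
            MeasureTheory.integral_Ioc_eq_integral_Ioo]
        · apply Integrable.const_mul
          have hcv := Complex.betaIntegral_convergent hp (hql l)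
          rw [intervalIntegrable_iff_integrableOn_Ioc_of_le zero_le_one] at hcv
          exact hcv.mono_set Set.Ioo_subset_Ioc_self
    _ = ((((2 : ℝ) ^ (2 * a - 1)) * pochR (2 * μ) n / (Nat.factorial n) : ℝ) : ℂ) *
        BetaC ((a : ℂ) + Complex.I * (ξ : ℂ) / 2) ((a : ℂ) - Complex.I * (ξ : ℂ) / 2) *
        F32 n ((n : ℂ) + 2 * (μ : ℂ)) ((a : ℂ) + Complex.I * (ξ : ℂ) / 2)
          (2 * (a : ℂ)) ((μ : ℂ) + 1/2) := by
        rw [F32, Finset.mul_sum]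
        refine Finset.sum_congr rfl fun l _ => ?_
        rw [beta_shift hp hq l, BetaC]
        rw [show ((a:ℂ) - Complex.I*(ξ:ℂ)/2) + ((a:ℂ) + Complex.I*(ξ:ℂ)/2) = 2*(a:ℂ) by ring,
          show ((a:ℂ) + Complex.I*(ξ:ℂ)/2) + ((a:ℂ) - Complex.I*(ξ:ℂ)/2) = 2*(a:ℂ) by ring]
        have hΓ : Complex.Gamma (2*(a:ℂ)) ≠ 0 := by
          apply Complex.Gamma_ne_zero_of_re_pos
          simpa using ha
        have hp2a : pochC (2*(a:ℂ)) l ≠ 0 := pochC_ne_zero (by simpa using ha) l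
        have hpmu : pochC ((μ:ℂ) + 1/2) l ≠ 0 := by
          apply pochC_ne_zero (by simpa using hμ2) l
        have hfl : ((Nat.factorial l : ℕ) : ℂ) ≠ 0 := by
          exact_mod_cast (Nat.factorial_pos l).ne'
        have hfn : ((Nat.factorial n : ℕ) : ℂ) ≠ 0 := by
          exact_mod_cast (Nat.factorial_pos n).ne'
        push_cast [pochC_ofReal]
        field_simp
end
end
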